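/- Let d ≥ 1 be a natural number and let r be a real number with 0 ≤ r ≤ π/4. For 1 ≤ k ≤ d define p_k = C(d−1, k−1) · (cos r)^(2(d−1)) · (tan r)^(2(k−1)) and p̃_k = C(d−1, k−1) · (cos r)^(2(d−1)) · (tan r)^(2(d−k)). Define q₁ = (tan r)^(2(d−1)) and, for 2 ≤ k ≤ d, q_k = C(d−1, k−1) · (cos r)^(2(d−1)) · ((tan r)^(2(d−k)) − (tan r)^(2(d+k−2))). Then: (i) q₁·p₁ = p̃₁ and q₁·p_k + q_k = p̃_k for every 2 ≤ k ≤ d; (ii) q_k ≥ 0 for every 1 ≤ k ≤ d; and (iii) ∑_{k=1}^{d} q_k = 1. -/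

import Mathlib

open Real Finset

/-- Degradability of the Grassmann channels: the coefficients `q k` of the
degrading map are nonnegative, sum to one, and relate the channel block
weights `p k` to the complementary block weights `p̃ k`. -/
theorem grassmann_degrading_map_coefficients
    (d : ℕ) (hd : 1 ≤ d) (r : ℝ) (hr0 : 0 ≤ r) (hr1 : r ≤ Real.pi / 4) :
    let p : ℕ → ℝ := fun k =>
      ((d - 1).choose (k - 1) : ℝ) * Real.cos r ^ (2 * (d - 1)) *
        Real.tan r ^ (2 * (k - 1))
    let pt : ℕ → ℝ := fun k =>
      ((d - 1).choose (k - 1) : ℝ) * Real.cos r ^ (2 * (d - 1)) *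
        Real.tan r ^ (2 * (d - k))
    let q : ℕ → ℝ := fun k =>
      if k = 1 then Real.tan r ^ (2 * (d - 1))
      else ((d - 1).choose (k - 1) : ℝ) * Real.cos r ^ (2 * (d - 1)) *
        (Real.tan r ^ (2 * (d - k)) - Real.tan r ^ (2 * (d + k - 2)))
    (q 1 * p 1 = pt 1 ∧ ∀ k, 2 ≤ k → k ≤ d → q 1 * p k + q k = pt k) ∧
    (∀ k, 1 ≤ k → k ≤ d → 0 ≤ q k) ∧
    (∑ k ∈ Finset.Icc 1 d, q k = 1) := by
  obtain ⟨n, rfl⟩ : ∃ n, d = n + 1 := ⟨d - 1, by omega⟩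
  intro p pt q
  have hπ : (0:ℝ) < Real.pi := Real.pi_pos
  have hrlt : r < Real.pi / 2 := lt_of_le_of_lt hr1 (by linarith)
  have hc : 0 < Real.cos r := Real.cos_pos_of_mem_Ioo ⟨by linarith, hrlt⟩
  have htan0 : 0 ≤ Real.tan r :=
    Real.tan_nonneg_of_nonneg_of_le_pi_div_two hr0 hrlt.le
  have htan1 : Real.tan r ≤ 1 := by
    rcases eq_or_lt_of_le hr1 with h | h
    · rw [h, Real.tan_pi_div_four]
    · have := Real.tan_lt_tan_of_nonneg_of_lt_pi_div_two hr0 (by linarith) h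
      rw [Real.tan_pi_div_four] at this
      exact this.le
  have ht0 : 0 ≤ Real.tan r ^ 2 := sq_nonneg _
  have ht1 : Real.tan r ^ 2 ≤ 1 := pow_le_one₀ htan0 htan1
  set t := Real.tan r ^ 2 with htdef
  set c := Real.cos r ^ 2 with hcdef
  have hct : c * (t + 1) = 1 := by
    rw [hcdef, htdef, Real.tan_eq_sin_div_cos]
    field_simp
    exact Real.sin_sq_add_cos_sq r
  have hpowt : ∀ m : ℕ, Real.tan r ^ (2 * m) = t ^ m := fun m => by
    rw [pow_mul, htdef]
  have hpowc : ∀ m : ℕ, Real.cos r ^ (2 * m) = c ^ m := fun m => by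
    rw [pow_mul, hcdef]
  -- part (i)
  have h1 : q 1 * p 1 = pt 1 := by
    simp only [p, pt, q, if_pos rfl, Nat.add_sub_cancel, Nat.sub_self, hpowt, hpowc,
      Nat.choose_zero_right, Nat.cast_one, pow_zero, one_mul, mul_one]
    ring
  have h2 : ∀ k, 2 ≤ k → k ≤ n + 1 → q 1 * p k + q k = pt k := by
    intro k hk2 hkd
    simp only [p, pt, q, if_pos rfl, if_neg (by omega : k ≠ 1)]
    simp only [Nat.add_sub_cancel, hpowt, hpowc]
    have hpow : t ^ n * t ^ (k - 1) = t ^ (n + 1 + k - 2) := by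
      rw [← pow_add]; congr 1; omega
    linear_combination ((n.choose (k - 1) : ℝ) * c ^ n) * hpow
  refine ⟨⟨h1, h2⟩, ?_, ?_⟩
  · -- nonnegativity
    intro k hk1 hkd
    by_cases hk : k = 1
    · simp only [q, if_pos hk, hpowt]
      exact pow_nonneg ht0 _
    · simp only [q, if_neg hk, hpowt]
      have : t ^ (n + 1 + k - 2) ≤ t ^ (n + 1 - k) :=
        pow_le_pow_of_le_one ht0 ht1 (by omega)
      have hcn : (0:ℝ) ≤ c ^ (n) := pow_nonneg (by positivity) _
      simp only [Nat.add_sub_cancel]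
      have := sub_nonneg.mpr this
      positivity
  · -- sum
    have hcn1 : c ^ n * (t + 1) ^ n = 1 := by
      rw [← mul_pow, hct, one_pow]
    have hsum_p : ∑ k ∈ Finset.Icc 1 (n + 1), p k = 1 := by
      rw [← Finset.Ico_add_one_right_eq_Icc, Finset.sum_Ico_eq_sum_range]
      simp only [p, Nat.add_sub_cancel, hpowt, hpowc, Nat.add_sub_cancel_left,
        add_comm 1, Nat.add_sub_cancel]
      calc ∑ i ∈ Finset.range (n + 1 + 1 - 1), (n.choose i : ℝ) * c ^ n * t ^ i
          = c ^ n * ∑ i ∈ Finset.range (n + 1), (n.choose i : ℝ) * t ^ i := by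
            rw [Finset.mul_sum]; apply Finset.sum_congr (by norm_num); intros; ring
        _ = c ^ n * (t + 1) ^ n := by
            rw [add_pow]
            congr 1
            apply Finset.sum_congr rfl; intros; simp; ring
        _ = 1 := hcn1
    have hsum_pt : ∑ k ∈ Finset.Icc 1 (n + 1), pt k = 1 := by
      rw [← Finset.Ico_add_one_right_eq_Icc, Finset.sum_Ico_eq_sum_range]
      simp only [pt, Nat.add_sub_cancel, hpowt, hpowc, add_comm 1, Nat.add_sub_cancel]
      calc ∑ i ∈ Finset.range (n + 1 + 1 - 1), (n.choose i : ℝ) * c ^ n * t ^ (n + 1 - (i + 1))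
          = c ^ n * ∑ i ∈ Finset.range (n + 1), (n.choose i : ℝ) * t ^ (n - i) := by
            rw [Finset.mul_sum]; apply Finset.sum_congr (by norm_num)
            intro i hi
            rw [show n + 1 - (i + 1) = n - i from by omega]; ring
        _ = c ^ n * (1 + t) ^ n := by
            rw [add_pow]
            congr 1
            apply Finset.sum_congr rfl; intros; simp; ring
        _ = 1 := by rw [add_comm]; exact hcn1
    have hsplit : ∀ f : ℕ → ℝ, ∑ k ∈ Finset.Icc 1 (n + 1), f k
        = f 1 + ∑ k ∈ Finset.Icc 2 (n + 1), f k := by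
      intro f
      have : Finset.Icc 1 (n + 1) = insert 1 (Finset.Icc 2 (n + 1)) := by
        ext x; simp [Finset.mem_Icc]; omega
      rw [this, Finset.sum_insert (by simp)]
    have hq2 : ∑ k ∈ Finset.Icc 2 (n + 1), q k
        = ∑ k ∈ Finset.Icc 2 (n + 1), (pt k - q 1 * p k) := by
      apply Finset.sum_congr rfl
      intro k hk
      rw [Finset.mem_Icc] at hk
      have := h2 k hk.1 hk.2
      linarith
    rw [hsplit q, hq2, Finset.sum_sub_distrib, ← Finset.mul_sum]
    have e1 : ∑ k ∈ Finset.Icc 2 (n + 1), pt k = 1 - pt 1 := by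
      rw [hsplit pt] at hsum_pt; linarith
    have e2 : ∑ k ∈ Finset.Icc 2 (n + 1), p k = 1 - p 1 := by
      rw [hsplit p] at hsum_p; linarith
    rw [e1, e2]
    have : q 1 = q 1 := rfl
    linear_combination h1
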